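/- Let F, G : ℕ → ℂ, let m > 1 be a natural number, and let α, β, D ∈ ℂ with |β| < m. Suppose lim_{N→∞} F(N)/N = D, G(N) = α·F(⌊N/m⌋) + β·G(⌊N/m⌋) for all N ≥ 1, and F(0) = G(0) = 0. Then lim_{N→∞} G(N)/N = D·α/(m − β). -/

import Mathlib

open Filter Topology

set_option maxHeartbeats 1000000

theorem stmt1 (F G : ℕ → ℂ) (m : ℕ) (α β D : ℂ) (hm : 1 < m)
    (hβ : ‖β‖ < m)
    (hF : Tendsto (fun N : ℕ => F N / N) atTop (𝓝 D))
    (hrec : ∀ N : ℕ, 1 ≤ N → G N = α * F (N / m) + β * G (N / m))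
    (hF0 : F 0 = 0) (hG0 : G 0 = 0) :
    Tendsto (fun N : ℕ => G N / N) atTop (𝓝 (D * α / (m - β))) := by
  have hmR : (1:ℝ) < m := by exact_mod_cast hm
  set q : ℝ := ‖β‖ with hqdef
  have hq0 : 0 ≤ q := norm_nonneg β
  have hqm : q < m := hβ
  set L : ℂ := D * α / (m - β) with hLdef
  have hmβ : (m:ℂ) - β ≠ 0 := by
    intro h
    have hβm : β = (m:ℂ) := by linear_combination -h
    have habsm : ‖β‖ = (m:ℝ) := by rw [hβm]; simp
    rw [hqdef, habsm] at hqm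
    exact lt_irrefl _ hqm
  have hL : α * D = L * ((m:ℂ) - β) := by
    rw [hLdef]; field_simp
  set r : ℝ := (max q 1 + m)/2 with hrdef
  have hmax : max q 1 < m := max_lt hqm hmR
  have hr1 : 1 < r := by
    have h1 : (1:ℝ) ≤ max q 1 := le_max_right _ _
    rw [hrdef]; linarith
  have hrm : r < m := by rw [hrdef]; linarith
  have hqr : q < r := by
    have h1 : q ≤ max q 1 := le_max_left _ _
    rw [hrdef]; linarith
  have hr0 : 0 < r := by linarith
  set c : ℝ := Real.logb m r with hcdef
  have hc0 : 0 < c := Real.logb_pos hmR hr1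
  have hc1 : c < 1 := by
    have h := Real.logb_lt_logb hmR hr0 hrm
    rwa [Real.logb_self_eq_one hmR] at h
  set f : ℕ → ℂ := fun n => F n - D * n with hfdef
  set e : ℕ → ℂ := fun n => G n - L * n with hedef
  set S : ℕ → ℝ := fun N => ∑ k ∈ Finset.range (Nat.log m N + 1), r ^ k with hSdef
  have hf0 : f 0 = 0 := by simp [hfdef, hF0]
  have he0 : e 0 = 0 := by simp [hedef, hG0]
  -- recursion for e
  have herec : ∀ N : ℕ, 1 ≤ N →
      e N = α * f (N / m) + β * e (N / m) - L * ((N % m : ℕ) : ℂ) := by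
    intro N hN
    have hdm : ((m:ℂ)) * ((N / m : ℕ) : ℂ) + ((N % m : ℕ) : ℂ) = (N : ℂ) := by
      exact_mod_cast congrArg (Nat.cast : ℕ → ℂ) (Nat.div_add_mod N m)
    simp only [hedef, hfdef]
    rw [hrec N hN]
    linear_combination ((N / m : ℕ) : ℂ) * hL + L * hdm
  -- S N = 1 when N < m
  have hSsmall : ∀ N : ℕ, N < m → S N = 1 := by
    intro N hN
    simp [hSdef, Nat.log_of_lt hN]
  have hSrec : ∀ N : ℕ, m ≤ N → S N = r * S (N / m) + 1 := by
    intro N hN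
    have hlogpos : 0 < Nat.log m N := Nat.log_pos hm hN
    have hlog : Nat.log m (N / m) + 1 = Nat.log m N := by
      rw [Nat.log_div_base]; omega
    simp only [hSdef]
    rw [← hlog]
    exact geom_sum_succ
  have hSnonneg : ∀ N : ℕ, 0 ≤ S N := by
    intro N
    apply Finset.sum_nonneg
    intro k _
    positivity
  -- bound on S
  have hrc : (m:ℝ) ^ c = r := Real.rpow_logb (by linarith) (by linarith) hr0
  have hSbound : ∀ N : ℕ, 1 ≤ N → S N ≤ r / (r - 1) * (N : ℝ) ^ c := by
    intro N hN
    have hKK : ((m : ℕ) : ℝ) ^ (Nat.log m N) ≤ (N : ℝ) := by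
      exact_mod_cast Nat.pow_log_le_self m (by omega : N ≠ 0)
    have hrK : r ^ (Nat.log m N) ≤ (N : ℝ) ^ c := by
      have h1 : r ^ (Nat.log m N) = (((m:ℝ)) ^ (Nat.log m N)) ^ c := by
        rw [← hrc, ← Real.rpow_natCast ((m:ℝ)^c) (Nat.log m N),
          ← Real.rpow_natCast (m:ℝ) (Nat.log m N),
          ← Real.rpow_mul (by linarith), ← Real.rpow_mul (by linarith), mul_comm]
      rw [h1]
      exact Real.rpow_le_rpow (by positivity) hKK hc0.le
    have hgeom : S N = (r ^ (Nat.log m N + 1) - 1) / (r - 1) := by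
      simp only [hSdef]
      rw [geom_sum_eq (by linarith : r ≠ 1)]
    rw [hgeom]
    have hr1' : (0:ℝ) < r - 1 := by linarith
    rw [div_le_iff₀ hr1']
    have : r / (r - 1) * (N:ℝ) ^ c * (r - 1) = r * (N:ℝ) ^ c := by
      field_simp
    rw [this, pow_succ, mul_comm (r ^ Nat.log m N) r]
    have := mul_le_mul_of_nonneg_left hrK (le_of_lt hr0)
    linarith
  -- |e N| recursion bound
  have hLm : (0:ℝ) ≤ ‖L‖ * m := by positivity
  have habs : ∀ N : ℕ, 1 ≤ N →
      ‖e N‖ ≤ ‖α‖ * ‖f (N / m)‖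
        + q * ‖e (N / m)‖ + ‖L‖ * m := by
    intro N hN
    rw [herec N hN]
    calc ‖α * f (N / m) + β * e (N / m) - L * ((N % m : ℕ) : ℂ)‖
        ≤ ‖α * f (N / m) + β * e (N / m)‖
          + ‖L * ((N % m : ℕ) : ℂ)‖ := by
          exact norm_sub_le _ _
      _ ≤ ‖α * f (N / m)‖ + ‖β * e (N / m)‖
          + ‖L * ((N % m : ℕ) : ℂ)‖ := by
          have := norm_add_le (α * f (N / m)) (β * e (N / m))
          linarith
      _ ≤ ‖α‖ * ‖f (N / m)‖ + q * ‖e (N / m)‖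
          + ‖L‖ * m := by
          rw [norm_mul, norm_mul, norm_mul]
          have h1 : ‖((N % m : ℕ) : ℂ)‖ ≤ (m:ℝ) := by
            rw [Complex.norm_natCast]
            exact_mod_cast (Nat.mod_lt N (by omega)).le
          have h2 := mul_le_mul_of_nonneg_left h1 (norm_nonneg L)
          simp only [hqdef]
          linarith
  -- main convergence
  rw [Metric.tendsto_atTop]
  intro ε hε
  set A : ℝ := ‖α‖ with hAdef
  have hA0 : 0 ≤ A := norm_nonneg α
  set ε' : ℝ := ε * (m - q) / (2 * (A + 1)) with hε'def
  have hε'0 : 0 < ε' := by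
    apply div_pos (mul_pos hε (by linarith)) (by linarith)
  -- get C₀ for f
  obtain ⟨N₀, hN₀⟩ := Metric.tendsto_atTop.mp hF ε' hε'0
  obtain ⟨C₁, hC₁⟩ := Finset.exists_le ((Finset.range (N₀ + 1)).image
    (fun n => ‖f n‖))
  set C₀ : ℝ := max C₁ 0 with hC₀def
  have hC₀0 : 0 ≤ C₀ := le_max_right _ _
  have hfbound : ∀ n : ℕ, ‖f n‖ ≤ ε' * n + C₀ := by
    intro n
    rcases le_or_gt n N₀ with h | h
    · have : ‖f n‖ ∈ (Finset.range (N₀ + 1)).image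
        (fun n => ‖f n‖) := by
        apply Finset.mem_image_of_mem
        simp; omega
      have h1 := hC₁ _ this
      have h2 : (0:ℝ) ≤ ε' * n := by positivity
      have : ‖f n‖ ≤ C₀ := le_trans h1 (le_max_left _ _)
      linarith
    · have hn1 : 1 ≤ n := by omega
      have hd := hN₀ n (by omega)
      rw [Complex.dist_eq] at hd
      have hn0 : ((n:ℂ)) ≠ 0 := by exact_mod_cast (by omega : n ≠ 0)
      have heq : f n = (F n / n - D) * n := by
        simp only [hfdef]; field_simp
      rw [heq, norm_mul, Complex.norm_natCast]
      have hnn : (0:ℝ) ≤ (n:ℝ) := Nat.cast_nonneg n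
      nlinarith [norm_nonneg (F n / n - D)]
  -- constants
  set a : ℝ := A * ε' / (m - q) with hadef
  have hmq0 : (0:ℝ) < (m:ℝ) - q := by linarith
  have ha0 : 0 ≤ a := by
    rw [hadef]; exact div_nonneg (mul_nonneg hA0 hε'0.le) hmq0.le
  set B : ℝ := A * C₀ + ‖L‖ * m with hBdef
  have hB0 : 0 ≤ B := by positivity
  -- key induction
  have hkey : ∀ N : ℕ, ‖e N‖ ≤ a * N + B * S N := by
    intro N
    induction N using Nat.strong_induction_on with
    | _ N ih =>
      rcases Nat.eq_zero_or_pos N with h0 | hN1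
      · subst h0
        rw [he0, norm_zero]
        have := hSnonneg 0
        positivity
      rcases lt_or_ge N m with hsm | hbig
      · -- N < m : N/m = 0
        have hdiv : N / m = 0 := Nat.div_eq_of_lt hsm
        have h1 := habs N hN1
        simp only [hdiv, hf0, he0, norm_zero, mul_zero, add_zero, zero_add] at h1
        rw [hSsmall N hsm]
        have h2 : (0:ℝ) ≤ a * N := by positivity
        have h3 : (0:ℝ) ≤ A * C₀ := by positivity
        simp only [hBdef]
        linarith
      · -- m ≤ N
        have hdivlt : N / m < N := Nat.div_lt_self (by omega) hm
        have ihd := ih (N / m) hdivlt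
        have h1 := habs N hN1
        have h2 := hfbound (N / m)
        have hcast : ((N / m : ℕ) : ℝ) ≤ (N : ℝ) / m := Nat.cast_div_le
        have hSr := hSrec N hbig
        have hSnn := hSnonneg (N / m)
        -- combine
        have hm0 : (0:ℝ) < m := by linarith
        have key : A * (ε' * ((N / m : ℕ):ℝ) + C₀) + q * (a * ((N / m : ℕ):ℝ) + B * S (N / m))
            + ‖L‖ * m ≤ a * N + B * S N := by
          have hcoef : A * ε' + q * a = a * m := by
            rw [hadef]; field_simp; ring
          have h4 : (A * ε' + q * a) * ((N / m : ℕ):ℝ) ≤ (A * ε' + q * a) * ((N:ℝ)/m) := by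
            apply mul_le_mul_of_nonneg_left hcast
            have h4a := mul_nonneg hA0 hε'0.le
            have h4b := mul_nonneg hq0 ha0
            linarith
          have h5 : a * m * ((N:ℝ)/m) = a * (N:ℝ) := by
            field_simp
          have hstep1 : A * ε' * ((N / m : ℕ):ℝ) + q * a * ((N / m : ℕ):ℝ)
              ≤ a * N :=
            calc A * ε' * ((N / m : ℕ):ℝ) + q * a * ((N / m : ℕ):ℝ)
                = (A * ε' + q * a) * ((N / m : ℕ):ℝ) := by ring
              _ ≤ (A * ε' + q * a) * ((N:ℝ)/m) := h4
              _ = a * m * ((N:ℝ)/m) := by rw [hcoef]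
              _ = a * (N:ℝ) := h5
          have hstep2 : A * C₀ + ‖L‖ * m + q * (B * S (N / m)) ≤ B * S N := by
            rw [hSr]
            have h6 : q * S (N / m) ≤ r * S (N / m) :=
              mul_le_mul_of_nonneg_right hqr.le hSnn
            have h7 : B * (q * S (N / m)) ≤ B * (r * S (N / m)) :=
              mul_le_mul_of_nonneg_left h6 hB0
            simp only [hBdef] at h7 ⊢
            nlinarith [mul_nonneg hq0 (hSnonneg (N/m))]
          nlinarith
        have h7 : q * ‖e (N / m)‖ ≤ q * (a * ((N / m : ℕ):ℝ) + B * S (N / m)) :=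
          mul_le_mul_of_nonneg_left ihd hq0
        have h8 : A * ‖f (N / m)‖ ≤ A * (ε' * ((N / m : ℕ):ℝ) + C₀) :=
          mul_le_mul_of_nonneg_left h2 hA0
        calc ‖e N‖
            ≤ A * ‖f (N / m)‖ + q * ‖e (N / m)‖
              + ‖L‖ * m := h1
          _ ≤ A * (ε' * ((N / m : ℕ):ℝ) + C₀) + q * (a * ((N / m : ℕ):ℝ) + B * S (N / m))
              + ‖L‖ * m := add_le_add (add_le_add h8 h7) le_rfl
          _ ≤ a * N + B * S N := key
    -- end induction
  -- finish: choose N₁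
  have hatarget : a < ε / 2 := by
    have hA1 : (0:ℝ) < A + 1 := by linarith
    have hkey2 : a * (2 * (A + 1)) = ε * A := by
      rw [hadef, hε'def]; field_simp
    nlinarith [mul_pos hε hA1]
  set B' : ℝ := B * (r / (r - 1)) with hB'def
  have htend : Tendsto (fun N : ℕ => B' * (N:ℝ) ^ (c - 1)) atTop (𝓝 0) := by
    have h1 : Tendsto (fun x : ℝ => x ^ (-(1 - c))) atTop (𝓝 0) :=
      tendsto_rpow_neg_atTop (by linarith)
    have h2 : Tendsto (fun N : ℕ => ((N:ℝ)) ^ (c - 1)) atTop (𝓝 0) := by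
      have h1' := h1.comp (tendsto_natCast_atTop_atTop (R := ℝ))
      simpa [Function.comp_def, neg_sub] using h1'
    have := h2.const_mul B'
    simpa using this
  have hev : ∀ᶠ N : ℕ in atTop, B' * (N:ℝ) ^ (c - 1) < ε / 2 :=
    htend.eventually (gt_mem_nhds (by linarith))
  obtain ⟨N₂, hN₂⟩ := eventually_atTop.mp hev
  refine ⟨max N₂ 1, fun N hN => ?_⟩
  have hN1 : 1 ≤ N := le_trans (le_max_right _ _) hN
  have hNN₂ : N₂ ≤ N := le_trans (le_max_left _ _) hN
  have hNpos : (0:ℝ) < (N:ℝ) := by exact_mod_cast (by omega : 0 < N)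
  have hNC : ((N:ℂ)) ≠ 0 := by exact_mod_cast (by omega : N ≠ 0)
  have hdist : dist (G N / (N:ℂ)) L = ‖e N‖ / (N:ℝ) := by
    rw [Complex.dist_eq]
    have heq : G N / (N:ℂ) - L = e N / (N:ℂ) := by
      simp only [hedef]; field_simp
    rw [heq, norm_div, Complex.norm_natCast]
  rw [hLdef] at hdist ⊢
  rw [hdist]
  have hb1 := hkey N
  have hb2 := hSbound N hN1
  have hb3 : B * S N ≤ B' * (N:ℝ) ^ c := by
    rw [hB'def]
    calc B * S N ≤ B * (r / (r - 1) * (N:ℝ) ^ c) := mul_le_mul_of_nonneg_left hb2 hB0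
      _ = B * (r / (r - 1)) * (N:ℝ) ^ c := by ring
  have hpow : (N:ℝ) ^ c / (N:ℝ) = (N:ℝ) ^ (c - 1) := by
    rw [Real.rpow_sub hNpos, Real.rpow_one]
  have hfin : ‖e N‖ / (N:ℝ) ≤ a + B' * (N:ℝ) ^ (c - 1) := by
    rw [div_le_iff₀ hNpos]
    have h9 : B' * (N:ℝ) ^ (c - 1) * (N:ℝ) = B' * (N:ℝ) ^ c := by
      rw [mul_assoc, ← hpow]
      field_simp
    rw [add_mul, h9]
    linarith
  have h10 := hN₂ N hNN₂
  linarith
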